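/- The series Σ_{k=1}^{∞} (2k choose k)/(4^k · k) converges and its sum equals 2·ln 2. -/

import Mathlib

open Real Filter Topology Set

noncomputable def cb (k : ℕ) : ℝ := (Nat.choose (2 * k) k : ℝ) / 4 ^ k

lemma cb_pos (k : ℕ) : 0 < cb k := by
  apply div_pos
  · exact_mod_cast Nat.choose_pos (by omega)
  · positivity

lemma cb_le_one (k : ℕ) : cb k ≤ 1 := by
  rw [cb, div_le_one (by positivity)]
  have h : Nat.choose (2 * k) k ≤ 4 ^ k := by
    calc Nat.choose (2 * k) k ≤ ∑ i ∈ Finset.range (2 * k + 1), Nat.choose (2 * k) i :=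
          Finset.single_le_sum (f := fun i => Nat.choose (2 * k) i)
            (fun _ _ => Nat.zero_le _) (by simp [Finset.mem_range]; omega)
      _ = 2 ^ (2 * k) := Nat.sum_range_choose _
      _ = 4 ^ k := by rw [pow_mul]; norm_num
  exact_mod_cast h

lemma cb_zero : cb 0 = 1 := by simp [cb]

lemma cb_abs (k : ℕ) : |cb k| ≤ 1 := by
  rw [abs_of_nonneg (cb_pos k).le]; exact cb_le_one k

lemma cb_rec (k : ℕ) : 2 * ((k : ℝ) + 1) * cb (k + 1) = (2 * k + 1) * cb k := by
  have h := Nat.succ_mul_centralBinom_succ k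
  have h2 : ((k : ℝ) + 1) * (Nat.choose (2 * (k + 1)) (k + 1) : ℝ)
      = 2 * (2 * k + 1) * (Nat.choose (2 * k) k : ℝ) := by
    have := congrArg (Nat.cast (R := ℝ)) h
    push_cast [Nat.centralBinom] at this
    linarith [this]
  rw [cb, cb, pow_succ]
  have h4 : (0:ℝ) < 4 ^ k := by positivity
  field_simp
  linear_combination 2 * h2

/-! Summability helpers -/

lemma summable_k_geom {r : ℝ} (h0 : 0 ≤ r) (h1 : r < 1) :
    Summable fun k : ℕ => (k : ℝ) * r ^ (k - 1) := by
  rw [← summable_nat_add_iff 1]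
  simp only [Nat.add_sub_cancel]
  have h1' : ‖r‖ < 1 := by rwa [Real.norm_eq_abs, abs_of_nonneg h0]
  have ha : Summable fun k : ℕ => (k : ℝ) * r ^ k := by
    simpa using summable_pow_mul_geometric_of_norm_lt_one 1 h1'
  have hb : Summable fun k : ℕ => r ^ k := summable_geometric_of_norm_lt_one h1'
  refine (ha.add hb).congr fun k => ?_
  push_cast
  ring

lemma summable_k1_geom {r : ℝ} (h0 : 0 ≤ r) (h1 : r < 1) :
    Summable fun k : ℕ => ((k : ℝ) + 1) * r ^ k := by
  have h1' : ‖r‖ < 1 := by rwa [Real.norm_eq_abs, abs_of_nonneg h0]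
  have ha : Summable fun k : ℕ => (k : ℝ) * r ^ k := by
    simpa using summable_pow_mul_geometric_of_norm_lt_one 1 h1'
  have hb : Summable fun k : ℕ => r ^ k := summable_geometric_of_norm_lt_one h1'
  convert ha.add hb using 2 with k
  ring

lemma summable_cb_pow {x : ℝ} (hx : |x| < 1) : Summable fun k => cb k * x ^ k := by
  refine Summable.of_norm_bounded (summable_geometric_of_norm_lt_one
    (by rwa [Real.norm_eq_abs, abs_abs]) : Summable fun k : ℕ => |x| ^ k) fun k => ?_
  rw [Real.norm_eq_abs, abs_mul, abs_pow]
  exact mul_le_of_le_one_left (by positivity) (cb_abs k)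

lemma summable_cb_deriv {x : ℝ} (hx : |x| < 1) :
    Summable fun k => cb k * ((k : ℝ) * x ^ (k - 1)) := by
  refine Summable.of_norm_bounded (summable_k_geom (abs_nonneg x) hx) fun k => ?_
  rw [Real.norm_eq_abs, abs_mul, abs_mul, abs_pow, Nat.abs_cast]
  calc |cb k| * ((k : ℝ) * |x| ^ (k - 1)) ≤ 1 * ((k : ℝ) * |x| ^ (k - 1)) := by
        apply mul_le_mul_of_nonneg_right (cb_abs k); positivity
    _ = (k : ℝ) * |x| ^ (k - 1) := one_mul _

lemma summable_kcb_pow {x : ℝ} (hx : |x| < 1) :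
    Summable fun k : ℕ => 2 * (k : ℝ) * cb k * x ^ k := by
  refine Summable.of_norm_bounded ((summable_k1_geom (abs_nonneg x) hx).mul_left 2) fun k => ?_
  rw [Real.norm_eq_abs]
  have : |2 * (k : ℝ) * cb k * x ^ k| = 2 * (k : ℝ) * |cb k| * |x| ^ k := by
    rw [abs_mul, abs_mul, abs_mul, abs_pow, Nat.abs_cast]; norm_num [mul_assoc]
  rw [this]
  have hk : (k : ℝ) ≤ (k : ℝ) + 1 := by linarith
  calc 2 * (k : ℝ) * |cb k| * |x| ^ k ≤ 2 * (k : ℝ) * 1 * |x| ^ k := by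
        apply mul_le_mul_of_nonneg_right _ (by positivity)
        apply mul_le_mul_of_nonneg_left (cb_abs k) (by positivity)
    _ ≤ 2 * (((k : ℝ) + 1) * |x| ^ k) := by
        rw [mul_one]
        nlinarith [pow_nonneg (abs_nonneg x) k]

lemma summable_k2cb_pow {x : ℝ} (hx : |x| < 1) :
    Summable fun k : ℕ => (2 * (k : ℝ) + 1) * cb k * x ^ k := by
  refine Summable.of_norm_bounded ((summable_k1_geom (abs_nonneg x) hx).mul_left 2) fun k => ?_
  rw [Real.norm_eq_abs, abs_mul, abs_mul, abs_pow]
  have h1 : |2 * (k : ℝ) + 1| = 2 * (k : ℝ) + 1 := abs_of_nonneg (by positivity)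
  rw [h1]
  have := cb_abs k
  nlinarith [pow_nonneg (abs_nonneg x) k, abs_nonneg (cb k), (cb_abs k),
    mul_le_of_le_one_right (by positivity : (0:ℝ) ≤ (2 * (k:ℝ) + 1)) (cb_abs k)]

/-! The generating function -/

noncomputable def gf (x : ℝ) : ℝ := ∑' k, cb k * x ^ k

lemma gf_hasDeriv {x : ℝ} (hx : |x| < 1) :
    HasDerivAt gf (∑' k, cb k * ((k : ℝ) * x ^ (k - 1))) x := by
  set r : ℝ := (1 + |x|) / 2 with hr
  have hr0 : 0 ≤ r := by positivity
  have hr1 : r < 1 := by rw [hr]; linarith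
  have hxr : |x| < r := by rw [hr]; linarith
  have hrpos : 0 < r := by positivity
  refine hasDerivAt_tsum_of_isPreconnected (F := ℝ)
    (u := fun k : ℕ => (k : ℝ) * r ^ (k - 1))
    (summable_k_geom hr0 hr1) (Metric.isOpen_ball (x := (0:ℝ)) (ε := r))
    ((convex_ball (0:ℝ) r).isPreconnected)
    (g := fun k t => cb k * t ^ k)
    (g' := fun k t => cb k * ((k : ℝ) * t ^ (k - 1)))
    (y₀ := 0) ?_ ?_ ?_ ?_ ?_
  · intro k y _
    exact (hasDerivAt_pow k y).const_mul (cb k)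
  · intro k y hy
    rw [Metric.mem_ball, dist_zero_right, Real.norm_eq_abs] at hy
    rw [Real.norm_eq_abs, abs_mul, abs_mul, abs_pow, Nat.abs_cast]
    calc |cb k| * ((k : ℝ) * |y| ^ (k - 1)) ≤ 1 * ((k : ℝ) * r ^ (k - 1)) := by
          apply mul_le_mul (cb_abs k) _ (by positivity) zero_le_one
          apply mul_le_mul_of_nonneg_left _ (Nat.cast_nonneg k)
          exact pow_le_pow_left₀ (abs_nonneg y) hy.le _
      _ = (k : ℝ) * r ^ (k - 1) := one_mul _
  · exact Metric.mem_ball_self hrpos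
  · refine summable_of_ne_finset_zero (s := {0}) fun k hk => ?_
    simp only [Finset.mem_singleton] at hk
    simp [zero_pow hk]
  · rwa [Metric.mem_ball, dist_zero_right, Real.norm_eq_abs]

lemma gf_ode {x : ℝ} (hx : |x| < 1) :
    2 * (1 - x) * (∑' k, cb k * ((k : ℝ) * x ^ (k - 1))) = gf x := by
  have hS1 := summable_cb_deriv hx
  have hS2 := summable_kcb_pow hx
  have hS3 := summable_cb_pow hx
  set D : ℝ := ∑' k, cb k * ((k : ℝ) * x ^ (k - 1)) with hD
  set A : ℝ := ∑' k : ℕ, (2 * (k : ℝ) + 1) * cb k * x ^ k with hA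
  have h2D : 2 * D = A := by
    rw [hD, ← tsum_mul_left, Summable.tsum_eq_zero_add (hS1.mul_left 2), hA]
    rw [show (2:ℝ) * (cb 0 * (((0:ℕ):ℝ) * x ^ (0 - 1))) = 0 by norm_num, zero_add]
    apply tsum_congr; intro k
    push_cast [Nat.add_sub_cancel]
    linear_combination x ^ k * cb_rec k
  have hA_split : A = (∑' k : ℕ, 2 * (k : ℝ) * cb k * x ^ k) + gf x := by
    rw [hA, gf, ← Summable.tsum_add hS2 hS3]
    apply tsum_congr; intro k; ring
  have hxA : (∑' k : ℕ, 2 * (k : ℝ) * cb k * x ^ k) = x * A := by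
    rw [hA, ← tsum_mul_left, Summable.tsum_eq_zero_add hS2]
    rw [show 2 * ((0:ℕ):ℝ) * cb 0 * x ^ (0:ℕ) = 0 by norm_num, zero_add]
    apply tsum_congr; intro k
    push_cast
    linear_combination x ^ (k + 1) * cb_rec k
  calc 2 * (1 - x) * D = A - x * A := by rw [← h2D]; ring
    _ = gf x := by rw [← hxA, hA_split]; ring

lemma gf_zero : gf 0 = 1 := by
  rw [gf, tsum_eq_single 0 (fun k hk => by rw [zero_pow hk, mul_zero])]
  simp [cb_zero]

lemma sqrt_hasDeriv {y : ℝ} (hy : y < 1) :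
    HasDerivAt (fun z : ℝ => Real.sqrt (1 - z)) (-(1 / (2 * Real.sqrt (1 - y)))) y := by
  have h1 : (0:ℝ) < 1 - y := by linarith
  have h := (Real.hasDerivAt_sqrt (ne_of_gt h1)).comp y
    (((hasDerivAt_id y).const_sub 1))
  refine h.congr_deriv ?_
  ring

lemma gf_eq {x : ℝ} (h0 : 0 ≤ x) (h1 : x < 1) : Real.sqrt (1 - x) * gf x = 1 := by
  have key : ∀ y ∈ Set.Icc (0:ℝ) x, Real.sqrt (1 - y) * gf y = Real.sqrt (1 - 0) * gf 0 := by
    have hderiv : ∀ y ∈ Set.Icc (0:ℝ) x,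
        HasDerivAt (fun z => Real.sqrt (1 - z) * gf z) 0 y := by
      intro y hy
      have hy1 : y < 1 := lt_of_le_of_lt hy.2 h1
      have hya : |y| < 1 := by rw [abs_of_nonneg hy.1]; exact hy1
      have hpos : (0:ℝ) < 1 - y := by linarith
      have hs0 : Real.sqrt (1 - y) ≠ 0 := by positivity
      have hsq : Real.sqrt (1 - y) ^ 2 = 1 - y := Real.sq_sqrt hpos.le
      have h := (sqrt_hasDeriv hy1).mul (gf_hasDeriv hya)
      refine h.congr_deriv (Eq.symm ?_)
      have hode := gf_ode hya
      rw [eq_comm]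
      field_simp
      linear_combination (norm := ring_nf) 2 * (∑' (k : ℕ), cb k * ((k:ℝ) * y ^ (k - 1))) * hsq + hode
    have hcont : ContinuousOn (fun z => Real.sqrt (1 - z) * gf z) (Set.Icc 0 x) :=
      fun y hy => ((hderiv y hy).continuousAt).continuousWithinAt
    intro y hy
    exact constant_of_has_deriv_right_zero hcont
      (fun z hz => ((hderiv z ⟨hz.1, hz.2.le⟩).hasDerivWithinAt)) y hy
  have := key x ⟨h0, le_refl x⟩
  rwa [sub_zero, Real.sqrt_one, one_mul, gf_zero] at this

lemma gsucc_eq {x : ℝ} (h0 : 0 ≤ x) (h1 : x < 1) :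
    ∑' k : ℕ, cb (k + 1) * x ^ k
      = 1 / (Real.sqrt (1 - x) * (1 + Real.sqrt (1 - x))) := by
  rcases eq_or_lt_of_le h0 with h | hx0
  · rw [← h]
    rw [tsum_eq_single 0 (fun k hk => by simp [zero_pow hk])]
    norm_num [cb, Real.sqrt_one]
  · have hxa : |x| < 1 := by rw [abs_of_nonneg h0]; exact h1
    have hS3 := summable_cb_pow hxa
    set s := Real.sqrt (1 - x) with hs
    have hpos : (0:ℝ) < 1 - x := by linarith
    have hs0 : 0 < s := Real.sqrt_pos.mpr hpos
    have hsq : s ^ 2 = 1 - x := Real.sq_sqrt hpos.le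
    have hgf : s * gf x = 1 := gf_eq h0 h1
    have hshift : gf x = 1 + ∑' k : ℕ, cb (k + 1) * x ^ (k + 1) := by
      rw [gf, Summable.tsum_eq_zero_add hS3, cb_zero, pow_zero, mul_one]
    have hx2 : x * ∑' k : ℕ, cb (k + 1) * x ^ k = ∑' k : ℕ, cb (k + 1) * x ^ (k + 1) := by
      rw [← tsum_mul_left]
      apply tsum_congr; intro k; ring
    have hgx : x * ∑' k : ℕ, cb (k + 1) * x ^ k = gf x - 1 := by
      rw [hx2, hshift]; ring
    have hxne : x ≠ 0 := ne_of_gt hx0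
    apply mul_left_cancel₀ hxne
    rw [hgx]
    have hgfv : gf x = 1 / s := by
      field_simp at hgf ⊢
      linarith [hgf]
    rw [hgfv]
    have h1s : (0:ℝ) < 1 + s := by linarith
    field_simp
    nlinarith [hsq]

/-! The integrated series -/

noncomputable def af (k : ℕ) : ℝ := cb (k + 1) / ((k : ℝ) + 1)

lemma af_nonneg (k : ℕ) : 0 ≤ af k := by
  apply div_nonneg (cb_pos _).le; positivity

lemma af_abs (k : ℕ) : |af k| ≤ 1 := by
  rw [abs_of_nonneg (af_nonneg k), af, div_le_one (by positivity)]
  calc cb (k + 1) ≤ 1 := cb_le_one _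
    _ ≤ (k : ℝ) + 1 := by
        have : (0:ℝ) ≤ (k : ℝ) := Nat.cast_nonneg k
        linarith

noncomputable def Ff (x : ℝ) : ℝ := ∑' k : ℕ, af k * x ^ (k + 1)

lemma summable_af_pow {x : ℝ} (hx : |x| < 1) : Summable fun k : ℕ => af k * x ^ (k + 1) := by
  refine Summable.of_norm_bounded ((summable_geometric_of_norm_lt_one
    (by rwa [Real.norm_eq_abs, abs_abs]) : Summable fun k : ℕ => |x| ^ k).mul_left |x|)
    fun k => ?_
  rw [Real.norm_eq_abs, abs_mul, abs_pow, pow_succ, mul_comm (|x| ^ k)]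
  exact mul_le_mul (af_abs k) le_rfl (by positivity) zero_le_one |>.trans_eq (one_mul _)

lemma Ff_hasDeriv {x : ℝ} (hx : |x| < 1) :
    HasDerivAt Ff (∑' k : ℕ, cb (k + 1) * x ^ k) x := by
  set r : ℝ := (1 + |x|) / 2 with hr
  have hr0 : 0 ≤ r := by positivity
  have hr1 : r < 1 := by rw [hr]; linarith
  have hxr : |x| < r := by rw [hr]; linarith
  have hrpos : 0 < r := by positivity
  have hkey : ∀ (k : ℕ) (y : ℝ),
      HasDerivAt (fun t : ℝ => af k * t ^ (k + 1)) (cb (k + 1) * y ^ k) y := by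
    intro k y
    have h := (hasDerivAt_pow (k + 1) y).const_mul (af k)
    refine h.congr_deriv (Eq.symm ?_)
    rw [af]
    push_cast [Nat.add_sub_cancel]
    field_simp
  refine hasDerivAt_tsum_of_isPreconnected (F := ℝ)
    (u := fun k : ℕ => r ^ k)
    (summable_geometric_of_norm_lt_one (by rwa [Real.norm_eq_abs, abs_of_nonneg hr0]))
    (Metric.isOpen_ball (x := (0:ℝ)) (ε := r))
    ((convex_ball (0:ℝ) r).isPreconnected)
    (g := fun k t => af k * t ^ (k + 1))
    (g' := fun k t => cb (k + 1) * t ^ k)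
    (y₀ := 0) ?_ ?_ ?_ ?_ ?_
  · intro k y _; exact hkey k y
  · intro k y hy
    rw [Metric.mem_ball, dist_zero_right, Real.norm_eq_abs] at hy
    rw [Real.norm_eq_abs, abs_mul, abs_pow]
    calc |cb (k + 1)| * |y| ^ k ≤ 1 * r ^ k := by
          apply mul_le_mul (cb_abs _) (pow_le_pow_left₀ (abs_nonneg y) hy.le k)
            (by positivity) zero_le_one
      _ = r ^ k := one_mul _
  · exact Metric.mem_ball_self hrpos
  · refine summable_of_ne_finset_zero (s := ∅) fun k _ => ?_
    simp
  · rwa [Metric.mem_ball, dist_zero_right, Real.norm_eq_abs]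

lemma Ff_zero : Ff 0 = 0 := by
  rw [Ff]
  convert tsum_zero with k
  simp

lemma Ff_eq {x : ℝ} (h0 : 0 ≤ x) (h1 : x < 1) :
    Ff x = 2 * Real.log 2 - 2 * Real.log (1 + Real.sqrt (1 - x)) := by
  have key : ∀ y ∈ Set.Icc (0:ℝ) x,
      Ff y + 2 * Real.log (1 + Real.sqrt (1 - y)) = Ff 0 + 2 * Real.log (1 + Real.sqrt (1 - 0)) := by
    have hderiv : ∀ y ∈ Set.Icc (0:ℝ) x,
        HasDerivAt (fun z => Ff z + 2 * Real.log (1 + Real.sqrt (1 - z))) 0 y := by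
      intro y hy
      have hy1 : y < 1 := lt_of_le_of_lt hy.2 h1
      have hya : |y| < 1 := by rw [abs_of_nonneg hy.1]; exact hy1
      have hpos : (0:ℝ) < 1 - y := by linarith
      have hs0 : (0:ℝ) < Real.sqrt (1 - y) := Real.sqrt_pos.mpr hpos
      have h1s : (1:ℝ) + Real.sqrt (1 - y) ≠ 0 := by positivity
      have hlog : HasDerivAt (fun z : ℝ => Real.log (1 + Real.sqrt (1 - z)))
          (-(1 / (2 * Real.sqrt (1 - y))) / (1 + Real.sqrt (1 - y))) y := by
        have hin : HasDerivAt (fun z : ℝ => 1 + Real.sqrt (1 - z))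
            (-(1 / (2 * Real.sqrt (1 - y)))) y := (sqrt_hasDeriv hy1).const_add 1
        exact hin.log h1s
      have h := (Ff_hasDeriv hya).add ((hlog.const_mul 2))
      refine h.congr_deriv (Eq.symm ?_)
      rw [gsucc_eq hy.1 hy1, eq_comm]
      field_simp
      ring
    have hcont : ContinuousOn (fun z => Ff z + 2 * Real.log (1 + Real.sqrt (1 - z)))
        (Set.Icc 0 x) := fun y hy => ((hderiv y hy).continuousAt).continuousWithinAt
    intro y hy
    exact constant_of_has_deriv_right_zero hcont
      (fun z hz => ((hderiv z ⟨hz.1, hz.2.le⟩).hasDerivWithinAt)) y hy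
  have := key x ⟨h0, le_refl x⟩
  rw [sub_zero, Real.sqrt_one, Ff_zero, zero_add] at this
  have h12 : (1:ℝ) + 1 = 2 := by norm_num
  rw [h12] at this
  linarith [this]

lemma log_one_add_sqrt_nonneg {x : ℝ} : 0 ≤ Real.log (1 + Real.sqrt (1 - x)) := by
  apply Real.log_nonneg
  have := Real.sqrt_nonneg (1 - x)
  linarith

lemma Ff_le {x : ℝ} (h0 : 0 ≤ x) (h1 : x < 1) : Ff x ≤ 2 * Real.log 2 := by
  rw [Ff_eq h0 h1]
  have := log_one_add_sqrt_nonneg (x := x)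
  linarith

lemma partial_le (n : ℕ) : ∑ k ∈ Finset.range n, af k ≤ 2 * Real.log 2 := by
  have ht : Tendsto (fun x : ℝ => ∑ k ∈ Finset.range n, af k * x ^ (k + 1)) (𝓝[<] (1:ℝ))
      (𝓝 (∑ k ∈ Finset.range n, af k)) := by
    have hc : Continuous fun x : ℝ => ∑ k ∈ Finset.range n, af k * x ^ (k + 1) := by
      continuity
    have := hc.tendsto 1
    simp only [one_pow, mul_one] at this
    exact this.mono_left nhdsWithin_le_nhds
  refine le_of_tendsto ht ?_
  have hmem : Set.Ico (0:ℝ) 1 ∈ 𝓝[<] (1:ℝ) := Ico_mem_nhdsLT (by norm_num)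
  filter_upwards [hmem] with x hx
  calc ∑ k ∈ Finset.range n, af k * x ^ (k + 1) ≤ Ff x := by
        apply Summable.sum_le_tsum (Finset.range n) (fun k _ => ?_)
          (summable_af_pow (by rw [abs_of_nonneg hx.1]; exact hx.2))
        exact mul_nonneg (af_nonneg k) (pow_nonneg hx.1 _)
    _ ≤ 2 * Real.log 2 := Ff_le hx.1 hx.2

lemma af_summable : Summable af := summable_of_sum_range_le af_nonneg partial_le

lemma af_tsum : ∑' k, af k = 2 * Real.log 2 := by
  have hle : ∑' k, af k ≤ 2 * Real.log 2 := tsum_le_of_sum_range_le af_nonneg partial_le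
  have hge : 2 * Real.log 2 ≤ ∑' k, af k := by
    have ht : Tendsto (fun x : ℝ => 2 * Real.log 2 - 2 * Real.log (1 + Real.sqrt (1 - x)))
        (𝓝[<] (1:ℝ)) (𝓝 (2 * Real.log 2)) := by
      have hca : ContinuousAt (fun x : ℝ => 2 * Real.log 2
          - 2 * Real.log (1 + Real.sqrt (1 - x))) 1 := by
        have hin : ContinuousAt (fun x : ℝ => 1 + Real.sqrt (1 - x)) 1 := by fun_prop
        have hlog : ContinuousAt (fun x : ℝ => Real.log (1 + Real.sqrt (1 - x))) 1 := by
          apply hin.log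
          rw [sub_self, Real.sqrt_zero]
          norm_num
        exact continuousAt_const.sub (hlog.const_mul 2)
      have := hca.tendsto
      simp only [sub_self, Real.sqrt_zero, add_zero, Real.log_one, mul_zero, sub_zero] at this
      exact this.mono_left nhdsWithin_le_nhds
    refine le_of_tendsto ht ?_
    have hmem : Set.Ico (0:ℝ) 1 ∈ 𝓝[<] (1:ℝ) := Ico_mem_nhdsLT (by norm_num)
    filter_upwards [hmem] with x hx
    rw [← Ff_eq hx.1 hx.2]
    apply Summable.tsum_le_tsum (fun k => ?_)
      (summable_af_pow (by rw [abs_of_nonneg hx.1]; exact hx.2)) af_summable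
    calc af k * x ^ (k + 1) ≤ af k * 1 := by
          apply mul_le_mul_of_nonneg_left _ (af_nonneg k)
          apply pow_le_one₀ hx.1 hx.2.le
      _ = af k := mul_one _
  linarith

/-- Σ_{k≥1} (2k choose k)/(4^k k) = 2 ln 2. -/
theorem central_binomial_log_series_at_one :
    HasSum (fun k : ℕ =>
        (Nat.choose (2 * (k + 1)) (k + 1) : ℝ) / (4 ^ (k + 1) * (k + 1)))
      (2 * Real.log 2) := by
  have hfun : (fun k : ℕ =>
      (Nat.choose (2 * (k + 1)) (k + 1) : ℝ) / (4 ^ (k + 1) * (k + 1))) = af := by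
    funext k
    rw [af, cb, div_div]
  rw [hfun, ← af_tsum]
  exact af_summable.hasSum
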